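/- Let m ≥ 1, let Ω ⊆ ℝ^m be a bounded open set, write E = ℝ^m ∖ closure(Ω). Let a, b, c : ℝ^m → ℝ be continuous with b(x) > 0 and c(x) ≥ 0 on ℝ^m ∖ Ω, sup_{x ∈ ℝ^m∖Ω} a₋(x)/b(x) < +∞ and sup_{x ∈ ℝ^m∖Ω} c(x)/b(x) < +∞, and let σ > 1, τ < 1. Let X : ℝ^m → ℝ^m be a continuous vector field and set Lw = Δw − ⟨X, ∇w⟩. Let u, v be positive functions on ℝ^m ∖ Ω, continuous there and C² on E, satisfying Lu + a(x)u − b(x)u^σ + c(x)u^τ ≥ 0 and Lv + a(x)v − b(x)v^σ + c(x)v^τ ≤ 0 on E, with liminf_{x→∞} v(x) > 0, limsup_{x→∞} u(x) < +∞, and 0 < u ≤ v on the boundary ∂Ω. Assume moreover that the (1/b)-weak maximum principle holds for L on E: for every C² function w on E with w* := sup_E w < +∞ and every γ < w*, one has inf over {x ∈ E : w(x) > γ} of (1/b(x))·Lw(x) ≤ 0. Then u(x) ≤ v(x) for all x ∈ ℝ^m ∖ Ω. -/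

import Mathlib

open Real Set

/-- The Euclidean Laplacian: trace of the Hessian. -/
noncomputable def lap {m : ℕ} (u : EuclideanSpace ℝ (Fin m) → ℝ)
    (x : EuclideanSpace ℝ (Fin m)) : ℝ :=
  ∑ i : Fin m, iteratedFDeriv ℝ 2 u x ![EuclideanSpace.single i 1, EuclideanSpace.single i 1]

/-- The drift operator `L w = Δ w - ⟨X, ∇ w⟩`. -/
noncomputable def Lop {m : ℕ} (X : EuclideanSpace ℝ (Fin m) → EuclideanSpace ℝ (Fin m))
    (w : EuclideanSpace ℝ (Fin m) → ℝ) (x : EuclideanSpace ℝ (Fin m)) : ℝ :=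
  lap w x - (inner ℝ (X x) (gradient w x) : ℝ)

lemma inner_grad_eq {m : ℕ} (f : EuclideanSpace ℝ (Fin m) → ℝ)
    (Y x : EuclideanSpace ℝ (Fin m)) :
    (inner ℝ Y (gradient f x) : ℝ) = fderiv ℝ f x Y := by
  have h : gradient f x = (InnerProductSpace.toDual ℝ _).symm (fderiv ℝ f x) := rfl
  rw [real_inner_comm, h, InnerProductSpace.toDual_symm_apply]

lemma Lop_lin {m : ℕ} (X : EuclideanSpace ℝ (Fin m) → EuclideanSpace ℝ (Fin m))
    {E : Set (EuclideanSpace ℝ (Fin m))} (hEo : IsOpen E)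
    {u v : EuclideanSpace ℝ (Fin m) → ℝ}
    (hu : ContDiffOn ℝ 2 u E) (hv : ContDiffOn ℝ 2 v E) (θ : ℝ)
    {x : EuclideanSpace ℝ (Fin m)} (hx : x ∈ E) :
    Lop X (fun y => u y - θ * v y) x = Lop X u x - θ * Lop X v x := by
  have hud : UniqueDiffOn ℝ E := hEo.uniqueDiffOn
  have hvE : ContDiffOn ℝ 2 ((-θ) • v) E := hv.const_smul (-θ)
  have heq : (fun y => u y - θ * v y) = (u + (-θ) • v) := by
    funext y; simp [Pi.add_apply, Pi.smul_apply, smul_eq_mul]; ring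
  have hiter : iteratedFDeriv ℝ 2 (fun y => u y - θ * v y) x
      = iteratedFDeriv ℝ 2 u x + (-θ) • iteratedFDeriv ℝ 2 v x := by
    rw [heq, ← iteratedFDerivWithin_of_isOpen (f := u + (-θ) • v) 2 hEo hx,
      iteratedFDerivWithin_add_apply (hu x hx) (hvE x hx) hud hx,
      iteratedFDerivWithin_const_smul_apply (hv x hx) hud hx,
      iteratedFDerivWithin_of_isOpen (f := u) 2 hEo hx,
      iteratedFDerivWithin_of_isOpen (f := v) 2 hEo hx]
  have hlap : lap (fun y => u y - θ * v y) x = lap u x - θ * lap v x := by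
    unfold lap
    simp only [hiter, ContinuousMultilinearMap.add_apply, ContinuousMultilinearMap.smul_apply,
      smul_eq_mul, neg_mul, Finset.sum_add_distrib, Finset.sum_neg_distrib]
    rw [Finset.mul_sum]
    ring
  have hdu : DifferentiableAt ℝ u x :=
    (hu.differentiableOn two_ne_zero).differentiableAt (hEo.mem_nhds hx)
  have hdv : DifferentiableAt ℝ v x :=
    (hv.differentiableOn two_ne_zero).differentiableAt (hEo.mem_nhds hx)
  have hfd : fderiv ℝ (fun y => u y - θ * v y) x = fderiv ℝ u x - θ • fderiv ℝ v x := by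
    rw [fderiv_fun_sub hdu (hdv.const_mul θ), fderiv_const_mul hdv θ]
  unfold Lop
  rw [hlap, inner_grad_eq, inner_grad_eq, inner_grad_eq, hfd]
  simp [ContinuousLinearMap.sub_apply, ContinuousLinearMap.smul_apply, smul_eq_mul]
  ring

set_option maxHeartbeats 1000000 in
/-- Comparison theorem on an exterior domain, under the (1/b)-weak maximum
principle for `L = Δ - ⟨X, ∇·⟩`. -/
theorem lichnerowicz_exterior_comparison {m : ℕ} (hm : 1 ≤ m)
    (Ω : Set (EuclideanSpace ℝ (Fin m))) (hΩo : IsOpen Ω) (hΩb : Bornology.IsBounded Ω)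
    (E : Set (EuclideanSpace ℝ (Fin m))) (hE : E = (closure Ω)ᶜ)
    (a b c : EuclideanSpace ℝ (Fin m) → ℝ)
    (ha : Continuous a) (hb : Continuous b) (hc : Continuous c)
    (hbpos : ∀ x ∈ Ωᶜ, 0 < b x) (hcpos : ∀ x ∈ Ωᶜ, 0 ≤ c x)
    (hab : ∃ M : ℝ, ∀ x ∈ Ωᶜ, (-min (a x) 0) / b x ≤ M)
    (hcb : ∃ M : ℝ, ∀ x ∈ Ωᶜ, c x / b x ≤ M)
    (σ τ : ℝ) (hσ : 1 < σ) (hτ : τ < 1)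
    (X : EuclideanSpace ℝ (Fin m) → EuclideanSpace ℝ (Fin m)) (hX : Continuous X)
    (u v : EuclideanSpace ℝ (Fin m) → ℝ)
    (hucont : ContinuousOn u Ωᶜ) (hvcont : ContinuousOn v Ωᶜ)
    (huC2 : ContDiffOn ℝ 2 u E) (hvC2 : ContDiffOn ℝ 2 v E)
    (hupos : ∀ x ∈ Ωᶜ, 0 < u x) (hvpos : ∀ x ∈ Ωᶜ, 0 < v x)
    (husub : ∀ x ∈ E, 0 ≤ Lop X u x + a x * u x - b x * u x ^ σ + c x * u x ^ τ)
    (hvsup : ∀ x ∈ E, Lop X v x + a x * v x - b x * v x ^ σ + c x * v x ^ τ ≤ 0)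
    (hvliminf : ∃ ε > 0, ∀ᶠ x in Filter.cocompact (EuclideanSpace ℝ (Fin m)), ε ≤ v x)
    (hulimsup : ∃ M : ℝ, ∀ᶠ x in Filter.cocompact (EuclideanSpace ℝ (Fin m)), u x ≤ M)
    (hbdry : ∀ x ∈ frontier Ω, 0 < u x ∧ u x ≤ v x)
    (hWMP : ∀ w : EuclideanSpace ℝ (Fin m) → ℝ, ContDiffOn ℝ 2 w E →
      BddAbove (w '' E) → ∀ γ < sSup (w '' E),
        sInf ((fun x => (1 / b x) * Lop X w x) '' {x ∈ E | γ < w x}) ≤ 0) :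
    ∀ x ∈ Ωᶜ, u x ≤ v x := by
  -- basic facts about E
  have hEo : IsOpen E := by rw [hE]; exact isClosed_closure.isOpen_compl
  have hEsub : E ⊆ Ωᶜ := by rw [hE]; exact compl_subset_compl.mpr subset_closure
  have hΩcc : IsClosed (Ωᶜ) := hΩo.isClosed_compl
  have hEne : E.Nonempty := by
    obtain ⟨r, hr⟩ := hΩb.closure.subset_closedBall 0
    refine ⟨EuclideanSpace.single ⟨0, hm⟩ (|r| + 1), ?_⟩
    rw [hE]
    intro hmem
    have h1 := hr hmem
    rw [Metric.mem_closedBall, dist_zero_right, EuclideanSpace.norm_single] at h1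
    have : |r| + 1 ≤ r := le_trans (le_abs_self _) h1
    have := le_abs_self r
    linarith [abs_nonneg r]
  have hsplit : ∀ x ∈ Ωᶜ, x ∈ E ∨ x ∈ frontier Ω := by
    intro x hx
    by_cases h : x ∈ closure Ω
    · right
      rw [frontier, hΩo.interior_eq]
      exact ⟨h, hx⟩
    · left; rw [hE]; exact h
  -- lower bound for v
  obtain ⟨ε, hεpos, hεv⟩ :
      ∃ ε : ℝ, 0 < ε ∧ ∀ x ∈ Ωᶜ, ε ≤ v x := by
    obtain ⟨ε₀, hε₀, hev⟩ := hvliminf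
    obtain ⟨K, hK, hKs⟩ := Filter.mem_cocompact.mp hev
    rcases (K ∩ Ωᶜ).eq_empty_or_nonempty with hCe | hCne
    · refine ⟨ε₀, hε₀, fun x hx => ?_⟩
      have hxK : x ∉ K := fun h => by
        have : x ∈ K ∩ Ωᶜ := ⟨h, hx⟩; rw [hCe] at this; exact this
      exact hKs hxK
    · obtain ⟨z, hzC, hzmin⟩ :=
        (hK.inter_right hΩcc).exists_isMinOn hCne (hvcont.mono inter_subset_right)
      refine ⟨min ε₀ (v z), lt_min hε₀ (hvpos z hzC.2), fun x hx => ?_⟩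
      by_cases hxK : x ∈ K
      · exact le_trans (min_le_right _ _) (hzmin ⟨hxK, hx⟩)
      · exact le_trans (min_le_left _ _) (hKs hxK)
  -- upper bound for u
  obtain ⟨U, hU1, hUu⟩ :
      ∃ U : ℝ, 1 ≤ U ∧ ∀ x ∈ Ωᶜ, u x ≤ U := by
    obtain ⟨M₀, hev⟩ := hulimsup
    obtain ⟨K, hK, hKs⟩ := Filter.mem_cocompact.mp hev
    rcases (K ∩ Ωᶜ).eq_empty_or_nonempty with hCe | hCne
    · refine ⟨max 1 M₀, le_max_left _ _, fun x hx => ?_⟩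
      have hxK : x ∉ K := fun h => by
        have : x ∈ K ∩ Ωᶜ := ⟨h, hx⟩; rw [hCe] at this; exact this
      exact le_trans (hKs hxK) (le_max_right _ _)
    · obtain ⟨z, hzC, hzmax⟩ :=
        (hK.inter_right hΩcc).exists_isMaxOn hCne (hucont.mono inter_subset_right)
      refine ⟨max 1 (max M₀ (u z)), le_max_left _ _, fun x hx => ?_⟩
      by_cases hxK : x ∈ K
      · exact le_trans (hzmax ⟨hxK, hx⟩) (le_trans (le_max_right _ _) (le_max_right _ _))
      · exact le_trans (hKs hxK)
          (le_trans (le_max_left _ _) (le_max_right _ _))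
  have hUpos : (0:ℝ) < U := lt_of_lt_of_le one_pos hU1
  -- the set of admissible multipliers
  set T : Set ℝ := {θ : ℝ | 1 ≤ θ ∧ ∀ x ∈ Ωᶜ, u x ≤ θ * v x} with hT
  have hθ₀ : max 1 (U / ε) ∈ T := by
    constructor
    · exact le_max_left _ _
    · intro x hx
      have h1 : U / ε * ε ≤ U / ε * v x :=
        mul_le_mul_of_nonneg_left (hεv x hx) (div_nonneg hUpos.le hεpos.le)
      have h2 : U / ε * ε = U := div_mul_cancel₀ U hεpos.ne'
      have h3 : U / ε * v x ≤ max 1 (U / ε) * v x :=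
        mul_le_mul_of_nonneg_right (le_max_right _ _) (hvpos x hx).le
      calc u x ≤ U := hUu x hx
        _ = U / ε * ε := h2.symm
        _ ≤ U / ε * v x := h1
        _ ≤ max 1 (U / ε) * v x := h3
  have hTne : T.Nonempty := ⟨_, hθ₀⟩
  have hTbdd : BddBelow T := ⟨1, fun θ hθ => hθ.1⟩
  set θ : ℝ := sInf T with hθdef
  have hθ1 : 1 ≤ θ := le_csInf hTne (fun θ' hθ' => hθ'.1)
  have hθv : ∀ x ∈ Ωᶜ, u x ≤ θ * v x := by
    intro x hx
    have hvx := hvpos x hx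
    have hlb : ∀ θ' ∈ T, u x / v x ≤ θ' := fun θ' hθ' =>
      (div_le_iff₀ hvx).mpr (by rw [mul_comm]; exact (mul_comm (v x) θ' ▸ hθ'.2 x hx))
    have := le_csInf hTne hlb
    exact (div_le_iff₀ hvx).mp this
  -- it suffices to show θ ≤ 1
  have hmain : θ ≤ 1 := by
    by_contra hθgt'
    push_neg at hθgt'
    have hθgt : 1 < θ := hθgt'
    have hθpos : 0 < θ := lt_trans one_pos hθgt
    set ζ : EuclideanSpace ℝ (Fin m) → ℝ := fun y => u y - θ * v y with hζdef
    have hζC2 : ContDiffOn ℝ 2 ζ E := huC2.sub (contDiffOn_const.mul hvC2)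
    have hζnonpos : ∀ x ∈ Ωᶜ, ζ x ≤ 0 := fun x hx => sub_nonpos.mpr (hθv x hx)
    have hζbdd : BddAbove (ζ '' E) := by
      refine ⟨0, ?_⟩
      rintro y ⟨x, hx, rfl⟩
      exact hζnonpos x (hEsub hx)
    -- sup of ζ on E is 0
    have hsupζ : sSup (ζ '' E) = 0 := by
      have hSle : sSup (ζ '' E) ≤ 0 :=
        csSup_le (hEne.image ζ) (by rintro y ⟨x, hx, rfl⟩; exact hζnonpos x (hEsub hx))
      rcases lt_or_eq_of_le hSle with hSlt | hSeq
      · exfalso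
        set S : ℝ := sSup (ζ '' E) with hSdef
        have hSU : S / U < 0 := div_neg_of_neg_of_pos hSlt hUpos
        set θ' : ℝ := max 1 (θ + S / U) with hθ'def
        have hθ'T : θ' ∈ T := by
          constructor
          · exact le_max_left _ _
          · intro x hx
            have hvx := hvpos x hx
            rcases hsplit x hx with hxE | hxF
            · rcases le_total U (v x) with hUv | hvU
              · have h1 : u x ≤ U := hUu x hx
                have h2 : v x ≤ θ' * v x := le_mul_of_one_le_left hvx.le (le_max_left _ _)
                linarith only [h1, h2, hUv]
              · have hζS : ζ x ≤ S := le_csSup hζbdd ⟨x, hxE, rfl⟩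
                have hζval : ζ x = u x - θ * v x := rfl
                have h3 : S / U * U ≤ S / U * v x :=
                  mul_le_mul_of_nonpos_left hvU hSU.le
                have h4 : S / U * U = S := div_mul_cancel₀ S hUpos.ne'
                have h5 : θ + S / U ≤ θ' := le_max_right _ _
                have h6 : (θ + S / U) * v x ≤ θ' * v x :=
                  mul_le_mul_of_nonneg_right h5 hvx.le
                have hζS2 : u x - θ * v x ≤ S := hζval ▸ hζS
                nlinarith only [h3, h4, h6, hζS2]
            · have h7 := (hbdry x hxF).2
              have h8 : v x ≤ θ' * v x := le_mul_of_one_le_left hvx.le (le_max_left _ _)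
              linarith only [h7, h8]
        have hcon : θ ≤ θ' := csInf_le hTbdd hθ'T
        have hθ'lt : θ' < θ := max_lt hθgt (by linarith only [hSU])
        linarith only [hcon, hθ'lt]
      · exact hSeq
    -- constants
    obtain ⟨M₀, hM₀⟩ := hab
    set M : ℝ := max M₀ 0 with hM
    have hM0 : 0 ≤ M := le_max_right _ _
    have hMa : ∀ x ∈ Ωᶜ, (-min (a x) 0) / b x ≤ M :=
      fun x hx => le_trans (hM₀ x hx) (le_max_left _ _)
    set t : ℝ := θ ^ (σ - 1) with ht
    have htgt : 1 < t := by
      have := Real.rpow_lt_rpow_of_exponent_lt hθgt (show (0:ℝ) < σ - 1 by linarith)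
      rwa [Real.rpow_zero] at this
    have htpos : 0 < t := lt_trans one_pos htgt
    set ρ : ℝ := (t + 1) / (2 * t) with hρ
    have hρpos : 0 < ρ := div_pos (by linarith) (by linarith)
    have hρlt1 : ρ < 1 := (div_lt_one (by linarith)).mpr (by linarith)
    have hσpos : (0:ℝ) < σ := lt_trans one_pos hσ
    set β1 : ℝ := ρ ^ (1 / σ) with hβ1
    set β2 : ℝ := if τ < 0 then θ ^ ((1 - τ) / τ) else (1/2 : ℝ) with hβ2
    set β : ℝ := max β1 β2 with hβ
    have hβ1pos : 0 < β1 := Real.rpow_pos_of_pos hρpos _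
    have hβpos : 0 < β := lt_of_lt_of_le hβ1pos (le_max_left _ _)
    have hβlt1 : β < 1 := by
      refine max_lt (Real.rpow_lt_one hρpos.le hρlt1 (by positivity)) ?_
      rw [hβ2]
      split
      · exact Real.rpow_lt_one_of_one_lt_of_neg hθgt
          (div_neg_of_pos_of_neg (by linarith) (by assumption))
      · norm_num
    set c₁ : ℝ := θ * (t - 1) / 2 with hc₁
    have hc₁pos : 0 < c₁ := by
      apply div_pos _ two_pos
      exact mul_pos hθpos (by linarith)
    set δ : ℝ := c₁ * ε ^ σ with hδ
    have hδpos : 0 < δ := mul_pos hc₁pos (Real.rpow_pos_of_pos hεpos _)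
    set γ : ℝ := -min (θ * ε * (1 - β)) (δ / (2 * (M + 1))) with hγ
    have hγneg : γ < 0 := by
      rw [hγ, neg_lt, neg_zero]
      refine lt_min ?_ (by positivity)
      exact mul_pos (mul_pos hθpos hεpos) (by linarith)
    have hγA : -(θ * ε * (1 - β)) ≤ γ := by
      rw [hγ]; exact neg_le_neg (min_le_left _ _)
    have hγB : -(δ / (2 * (M + 1))) ≤ γ := by
      rw [hγ]; exact neg_le_neg (min_le_right _ _)
    -- apply the weak maximum principle
    have hkey := hWMP ζ hζC2 hζbdd γ (by rw [hsupζ]; exact hγneg)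
    -- the superlevel set is nonempty
    obtain ⟨y₀, hy₀mem, hy₀⟩ :=
      exists_lt_of_lt_csSup (hEne.image ζ) (show γ < sSup (ζ '' E) by rw [hsupζ]; exact hγneg)
    obtain ⟨x₀, hx₀E, rfl⟩ := hy₀mem
    have hne : ((fun x => (1 / b x) * Lop X ζ x) '' {x ∈ E | γ < ζ x}).Nonempty :=
      ⟨_, ⟨x₀, ⟨hx₀E, hy₀⟩, rfl⟩⟩
    -- lower bound on the superlevel set
    have hlow : ∀ y ∈ (fun x => (1 / b x) * Lop X ζ x) '' {x ∈ E | γ < ζ x}, δ / 2 ≤ y := by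
      rintro y ⟨x, ⟨hxE, hγx⟩, rfl⟩
      have hxc : x ∈ Ωᶜ := hEsub hxE
      have hbx : 0 < b x := hbpos x hxc
      have hux : 0 < u x := hupos x hxc
      have hvx : 0 < v x := hvpos x hxc
      have hεx : ε ≤ v x := hεv x hxc
      have hζval : ζ x = u x - θ * v x := rfl
      have hζx : ζ x ≤ 0 := hζnonpos x hxc
      have huθv : u x ≤ θ * v x := hθv x hxc
      have hγζ : γ < ζ x := hγx
      -- lower bound u ≥ θ v β
      have hγζ2 : γ < u x - θ * v x := hγζ
      have f1 : θ * v x * β ≤ u x := by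
        have h0 : (0:ℝ) ≤ 1 - β := by linarith only [hβlt1]
        have h1 : θ * (1 - β) * ε ≤ θ * (1 - β) * v x :=
          mul_le_mul_of_nonneg_left hεx (mul_nonneg hθpos.le h0)
        nlinarith only [h1, hγA, hγζ2]
      have hθvβpos : 0 < θ * v x * β := by positivity
      have hσposle : (0:ℝ) ≤ σ := hσpos.le
      have hvσ : ε ^ σ ≤ v x ^ σ := Real.rpow_le_rpow hεpos.le hεx hσposle
      have hvσpos : 0 < v x ^ σ := Real.rpow_pos_of_pos hvx _
      have hθσpos : 0 < θ ^ σ := Real.rpow_pos_of_pos hθpos _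
      have h4 : θ * t = θ ^ σ := by
        have h := Real.rpow_add hθpos 1 (σ - 1)
        rw [Real.rpow_one] at h
        rw [show (1:ℝ) + (σ - 1) = σ by ring] at h
        rw [ht]
        exact h.symm
      -- main power estimate
      have f2 : δ ≤ u x ^ σ - θ * v x ^ σ := by
        have h1 : (θ * v x * β) ^ σ ≤ u x ^ σ := Real.rpow_le_rpow hθvβpos.le f1 hσposle
        have h2 : (θ * v x * β) ^ σ = θ ^ σ * v x ^ σ * β ^ σ := by
          rw [Real.mul_rpow (by positivity) hβpos.le, Real.mul_rpow hθpos.le hvx.le]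
        have h3 : ρ ≤ β ^ σ := by
          have hb1 : β1 ^ σ ≤ β ^ σ := Real.rpow_le_rpow hβ1pos.le (le_max_left _ _) hσposle
          have hb2 : β1 ^ σ = ρ := by
            rw [hβ1, ← Real.rpow_mul hρpos.le, one_div_mul_cancel hσpos.ne', Real.rpow_one]
          linarith
        rw [h2] at h1
        have hρt : θ ^ σ * ρ = θ * (t + 1) / 2 := by
          rw [← h4, hρ]
          field_simp
        have s1 : θ ^ σ * v x ^ σ * ρ ≤ θ ^ σ * v x ^ σ * β ^ σ :=
          mul_le_mul_of_nonneg_left h3 (mul_pos hθσpos hvσpos).le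
        have s2 : θ ^ σ * v x ^ σ * ρ = θ * (t + 1) / 2 * v x ^ σ := by
          linear_combination (v x ^ σ) * hρt
        have s3 : θ * (t + 1) / 2 * v x ^ σ - θ * v x ^ σ = c₁ * v x ^ σ := by
          rw [hc₁]; ring
        have s4 : c₁ * ε ^ σ ≤ c₁ * v x ^ σ := mul_le_mul_of_nonneg_left hvσ hc₁pos.le
        rw [hδ]
        linarith only [h1, s1, s2, s3, s4]
      -- the τ-term
      have hvτpos : 0 < v x ^ τ := Real.rpow_pos_of_pos hvx _
      have f3 : u x ^ τ ≤ θ * v x ^ τ := by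
        by_cases hτ0 : τ < 0
        · have h1 : u x ^ τ ≤ (θ * v x * β) ^ τ :=
            Real.rpow_le_rpow_of_nonpos hθvβpos f1 hτ0.le
          have h2 : (θ * v x * β) ^ τ = θ ^ τ * v x ^ τ * β ^ τ := by
            rw [Real.mul_rpow (by positivity) hβpos.le, Real.mul_rpow hθpos.le hvx.le]
          have hβ2pos : 0 < β2 := by
            rw [hβ2, if_pos hτ0]
            exact Real.rpow_pos_of_pos hθpos _
          have hβ2τ : β ^ τ ≤ θ ^ (1 - τ) := by
            have h3 : β ^ τ ≤ β2 ^ τ :=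
              Real.rpow_le_rpow_of_nonpos hβ2pos (le_max_right _ _) hτ0.le
            have h4' : β2 ^ τ = θ ^ (1 - τ) := by
              rw [hβ2, if_pos hτ0, ← Real.rpow_mul hθpos.le,
                div_mul_cancel₀ _ (ne_of_lt hτ0)]
            linarith
          have h5 : θ ^ τ * θ ^ (1 - τ) = θ := by
            rw [← Real.rpow_add hθpos, show τ + (1 - τ) = (1:ℝ) by ring, Real.rpow_one]
          have hθτpos : 0 < θ ^ τ := Real.rpow_pos_of_pos hθpos _
          have h6 : θ ^ τ * v x ^ τ * β ^ τ ≤ θ ^ τ * v x ^ τ * θ ^ (1 - τ) :=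
            mul_le_mul_of_nonneg_left hβ2τ (mul_pos hθτpos hvτpos).le
          have h7 : θ ^ τ * v x ^ τ * θ ^ (1 - τ) = θ * v x ^ τ := by
            linear_combination (v x ^ τ) * h5
          rw [h2] at h1
          linarith only [h1, h6, h7]
        · push_neg at hτ0
          have h1 : u x ^ τ ≤ (θ * v x) ^ τ := Real.rpow_le_rpow hux.le huθv hτ0
          have h2 : (θ * v x) ^ τ = θ ^ τ * v x ^ τ := Real.mul_rpow hθpos.le hvx.le
          have h3 : θ ^ τ ≤ θ := by
            have h := Real.rpow_le_rpow_of_exponent_le hθgt.le hτ.le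
            rwa [Real.rpow_one] at h
          rw [h2] at h1
          nlinarith only [h1, h3, hvτpos]
      -- the a-term
      have f4 : M * γ ≤ -(a x / b x) * ζ x := by
        rcases le_or_gt 0 (a x) with hax | hax
        · have h1 : 0 ≤ a x / b x := div_nonneg hax hbx.le
          have g1 : 0 ≤ (a x / b x) * (-(ζ x)) := mul_nonneg h1 (neg_nonneg.mpr hζx)
          have g1' : 0 ≤ -(a x / b x) * ζ x := by rw [neg_mul, ← mul_neg]; exact g1
          have g2 : M * γ ≤ M * 0 := mul_le_mul_of_nonneg_left hγneg.le hM0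
          rw [mul_zero] at g2
          exact le_trans g2 g1'
        · have h1 : (-(a x)) / b x ≤ M := by
            have h := hMa x hxc
            rwa [min_eq_left hax.le] at h
          have h2 : 0 ≤ (-(a x)) / b x := div_nonneg (by linarith) hbx.le
          have h4 : M * ζ x ≤ ((-(a x)) / b x) * ζ x := mul_le_mul_of_nonpos_right h1 hζx
          have h5 : M * γ ≤ M * ζ x := mul_le_mul_of_nonneg_left hγζ.le hM0
          have h3 : -(a x / b x) * ζ x = ((-(a x)) / b x) * ζ x := by ring
          rw [h3]
          exact le_trans h5 h4
      -- the differential inequalities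
      have hLu : -(a x * u x) + b x * u x ^ σ - c x * u x ^ τ ≤ Lop X u x := by
        have h := husub x hxE; linarith
      have hLv : Lop X v x ≤ -(a x * v x) + b x * v x ^ σ - c x * v x ^ τ := by
        have h := hvsup x hxE; linarith
      have hLζ : Lop X ζ x = Lop X u x - θ * Lop X v x := Lop_lin X hEo huC2 hvC2 θ hxE
      have hθLv : θ * Lop X v x ≤ θ * (-(a x * v x) + b x * v x ^ σ - c x * v x ^ τ) :=
        mul_le_mul_of_nonneg_left hLv hθpos.le
      have hkey2 : -(a x) * ζ x + b x * (u x ^ σ - θ * v x ^ σ)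
          - c x * (u x ^ τ - θ * v x ^ τ) ≤ Lop X ζ x := by
        rw [hLζ, hζval]
        nlinarith only [hLu, hθLv]
      have hbinv : (0:ℝ) < 1 / b x := by positivity
      have hmono : (1 / b x) * (-(a x) * ζ x + b x * (u x ^ σ - θ * v x ^ σ)
            - c x * (u x ^ τ - θ * v x ^ τ)) ≤ (1 / b x) * Lop X ζ x :=
        mul_le_mul_of_nonneg_left hkey2 hbinv.le
      have hexp : (1 / b x) * (-(a x) * ζ x + b x * (u x ^ σ - θ * v x ^ σ)
            - c x * (u x ^ τ - θ * v x ^ τ))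
          = -(a x / b x) * ζ x + (u x ^ σ - θ * v x ^ σ)
            - (c x / b x) * (u x ^ τ - θ * v x ^ τ) := by
        field_simp
      have hcterm : (c x / b x) * (u x ^ τ - θ * v x ^ τ) ≤ 0 := by
        have h1 : 0 ≤ c x / b x := div_nonneg (hcpos x hxc) hbx.le
        nlinarith only [h1, f3]
      have hMγ : -(δ / 2) ≤ M * γ := by
        have h2 : M * (-(δ / (2 * (M + 1)))) ≤ M * γ := mul_le_mul_of_nonneg_left hγB hM0
        have h3 : M * (δ / (2 * (M + 1))) ≤ δ / 2 := by
          rw [← mul_div_assoc, div_le_div_iff₀ (by positivity) (by norm_num : (0:ℝ) < 2)]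
          nlinarith only [hδpos, hM0]
        nlinarith only [h2, h3]
      rw [hexp] at hmono
      linarith only [hmono, f4, f2, hcterm, hMγ]
    have h1 : δ / 2 ≤ sInf ((fun x => (1 / b x) * Lop X ζ x) '' {x ∈ E | γ < ζ x}) :=
      le_csInf hne hlow
    linarith only [h1, hkey, hδpos]
  intro x hx
  have h1 := hθv x hx
  nlinarith only [h1, hmain, hvpos x hx]
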